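/- For all positive reals c, d, β, with W = (1, −c/(dβ)): (i) the dot product of W with the vector ∂F/∂b evaluated at E₁ = (dβ/2, dβ²/2), which equals (0, 1), is −c/(dβ) ≠ 0; and (ii) writing V = (1, β), the second derivative at t = 0 of the curve t ↦ F((dβ/2 + t, dβ²/2 + tβ)) with parameter b = d²β²/4 equals (0, 2), so the dot product of W with this vector is −2c/(dβ) ≠ 0. -/

import Mathlib

/-- Sotomayor transversality conditions at `E₁ = (dβ/2, dβ²/2)` with `b = d²β²/4`:
(i) the derivative of `F` with respect to the parameter `b` at `E₁` equals `(0,1)`, and its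
dot product with `W = (1, −c/(dβ))` is `−c/(dβ) ≠ 0`; (ii) the second derivative at `t = 0`
of `t ↦ F(dβ/2 + t, dβ²/2 + tβ)` (direction `V = (1, β)`) equals `(0,2)`, and its dot
product with `W` is `−2c/(dβ) ≠ 0`. -/
theorem stmt14 (c d β : ℝ) (hc : 0 < c) (hd : 0 < d) (hβ : 0 < β) :
    HasDerivAt
      (fun b' : ℝ =>
        ((c * (β * (d * β / 2)^2 / (d * β^2 / 2) - d * β / 2),
          b' + (d * β / 2)^2 - d * (d * β^2 / 2)) : ℝ × ℝ))
      ((0 : ℝ), (1 : ℝ)) (d^2 * β^2 / 4) ∧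
    (1 : ℝ) * 0 + (-(c / (d * β))) * 1 = -(c / (d * β)) ∧
    -(c / (d * β)) ≠ 0 ∧
    deriv (deriv
      (fun t : ℝ =>
        ((c * (β * (d * β / 2 + t)^2 / (d * β^2 / 2 + t * β) - (d * β / 2 + t)),
          d^2 * β^2 / 4 + (d * β / 2 + t)^2 - d * (d * β^2 / 2 + t * β)) : ℝ × ℝ))) 0 =
      ((0 : ℝ), (2 : ℝ)) ∧
    (1 : ℝ) * 0 + (-(c / (d * β))) * 2 = -(2 * c / (d * β)) ∧
    -(2 * c / (d * β)) ≠ 0 := by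

  have hdβ : 0 < d * β := mul_pos hd hβ
  have hne : c / (d * β) ≠ 0 := div_ne_zero hc.ne' hdβ.ne'
  refine ⟨?_, by ring, neg_ne_zero.mpr hne, ?_, by ring, ?_⟩
  · exact HasDerivAt.prodMk (hasDerivAt_const _ _) (((hasDerivAt_id _).add_const _).sub_const _)
  · set f : ℝ → ℝ × ℝ := fun t =>
      ((c * (β * (d * β / 2 + t)^2 / (d * β^2 / 2 + t * β) - (d * β / 2 + t)),
        d^2 * β^2 / 4 + (d * β / 2 + t)^2 - d * (d * β^2 / 2 + t * β)) : ℝ × ℝ) with hf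
    set g : ℝ → ℝ × ℝ := fun t => (0, t^2) with hgdef
    have heq : f =ᶠ[nhds (0:ℝ)] g := by
      have hmem : Set.Ioo (-(d * β / 2)) (d * β / 2) ∈ nhds (0:ℝ) := by
        apply Ioo_mem_nhds <;> [linarith; linarith]
      filter_upwards [hmem] with t ht
      obtain ⟨h1, h2⟩ := ht
      have hx : 0 < d * β / 2 + t := by linarith
      have hden : d * β^2 / 2 + t * β ≠ 0 := by
        have : d * β^2 / 2 + t * β = β * (d * β / 2 + t) := by ring
        rw [this]
        positivity
      simp only [hf, hgdef, Prod.mk.injEq]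
      constructor
      · have hq : β * (d * β / 2 + t)^2 / (d * β^2 / 2 + t * β) = d * β / 2 + t := by
          rw [div_eq_iff hden]; ring
        rw [hq]; ring
      · ring
    have hg' : deriv g = fun t => ((0 : ℝ), 2 * t) := by
      funext t
      have h : HasDerivAt g ((0 : ℝ), 2 * t) t := by
        refine HasDerivAt.prodMk (hasDerivAt_const _ _) ?_
        simpa using hasDerivAt_pow 2 t
      exact h.deriv
    have h2 : deriv (deriv g) 0 = ((0:ℝ), (2:ℝ)) := by
      rw [hg']
      have h : HasDerivAt (fun t : ℝ => ((0:ℝ), 2 * t)) ((0:ℝ), (2:ℝ)) 0 := by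
        refine HasDerivAt.prodMk (hasDerivAt_const _ _) ?_
        simpa using (hasDerivAt_id (0:ℝ)).const_mul 2
      exact h.deriv
    calc deriv (deriv f) 0 = deriv (deriv g) 0 := (heq.deriv).deriv_eq
      _ = ((0:ℝ), (2:ℝ)) := h2
  · intro h
    apply hne
    have : 2 * c / (d * β) = 0 := by linarith [neg_eq_zero.mp h]
    rw [div_eq_zero_iff] at this
    rcases this with h' | h'
    · linarith
    · exact absurd h' hdβ.ne'
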